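/- arXiv:1409.4752 — 2 statements merged into one kernel-verified Lean document; each statement's English description precedes it below -/
import Mathlib

section
/- Let ε ∈ (0,1) and let 𝔚₁ = {(W_{s₁},V_{s₁})}_{s₁∈S₁} and 𝔚₂ = {(W_{s₂},V_{s₂})}_{s₂∈S₂} be two compound wiretap channels with common finite alphabets X, Y, Z such that D(𝔚₁,𝔚₂) < ε. Then for every n ∈ ℕ, every finite set U with uniform distribution, and every stochastic encoder E, the per-n compound expressions F_n(𝔚_i) = (1/n)·sup_{U,E} ( inf_{s_i∈S_i} I(U;Yⁿ_{s_i}) − sup_{s_i∈S_i} I(U;Zⁿ_{s_i}) ) satisfy |F_n(𝔚₁) − F_n(𝔚₂)| ≤ 4ε·log(|Y|·|Z|) + 8H₂(ε); consequently, the multi-letter secrecy capacities C_S(𝔚_i) = lim_{n→∞} F_n(𝔚_i) (these limits exist) satisfy |C_S(𝔚₁) − C_S(𝔚₂)| ≤ 4ε·log(|Y|·|Z|) + 8H₂(ε). -/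
open Real Finset

/-- Binary entropy function (base 2). -/
noncomputable def H2 (ε : ℝ) : ℝ :=
  -(ε * Real.logb 2 ε) - (1 - ε) * Real.logb 2 (1 - ε)

/-- `p` is a probability distribution on the finite alphabet `α`. -/
def IsProb {α : Type*} [Fintype α] (p : α → ℝ) : Prop :=
  (∀ a, 0 ≤ p a) ∧ ∑ a, p a = 1

/-- `W` is a channel (stochastic matrix) from `X` to `Y`. -/
def IsChannel {X Y : Type*} [Fintype Y] (W : X → Y → ℝ) : Prop :=
  ∀ x, (∀ y, 0 ≤ W x y) ∧ ∑ y, W x y = 1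

/-- Conditional entropy `H(Y|X‖P)` (base 2) of a joint distribution `P` on `X × Y`. -/
noncomputable def condEnt {X Y : Type*} [Fintype X] [Fintype Y] (P : X × Y → ℝ) : ℝ :=
  -∑ x : X, ∑ y : Y, P (x, y) * Real.logb 2 (P (x, y) / ∑ y' : Y, P (x, y'))

/-- Mutual information `I(U;Y‖P)` (base 2) of a joint distribution `P` on `U × Y`. -/
noncomputable def mutInf {U Y : Type*} [Fintype U] [Fintype Y] (P : U × Y → ℝ) : ℝ :=
  ∑ u : U, ∑ y : Y,
    P (u, y) * Real.logb 2 (P (u, y) / ((∑ y' : Y, P (u, y')) * ∑ u' : U, P (u', y)))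

/-- Channel distance `d(W,W') = max_x ∑_y |W(y|x) − W'(y|x)|`. -/
noncomputable def dChan {X Y : Type*} [Fintype Y] (W W' : X → Y → ℝ) : ℝ :=
  ⨆ x : X, ∑ y : Y, |W x y - W' x y|

/-- Joint distribution on `U × Yⁿ` induced by the uniform distribution on `U`, a stochastic
encoder `E` and the `n`-fold memoryless extension of the channel `W`. -/
noncomputable def jointOut {X Y U : Type*} [Fintype X] [Fintype U] (n : ℕ)
    (W : X → Y → ℝ) (E : U → (Fin n → X) → ℝ) : U × (Fin n → Y) → ℝ :=
  fun p => ∑ xn : Fin n → X,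
    (∏ i : Fin n, W (xn i) (p.2 i)) * E p.1 xn * ((Fintype.card U : ℝ))⁻¹

/-- Distance `D(𝔚₁,𝔚₂)` between two compound wiretap channels. -/
noncomputable def Dcwc {X Y Z : Type*} [Fintype Y] [Fintype Z] {S₁ S₂ : Type*}
    (W₁ : S₁ → X → Y → ℝ) (V₁ : S₁ → X → Z → ℝ)
    (W₂ : S₂ → X → Y → ℝ) (V₂ : S₂ → X → Z → ℝ) : ℝ :=
  max (max (⨆ s₂ : S₂, ⨅ s₁ : S₁, dChan (W₁ s₁) (W₂ s₂))
           (⨆ s₁ : S₁, ⨅ s₂ : S₂, dChan (W₁ s₁) (W₂ s₂)))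
      (max (⨆ s₂ : S₂, ⨅ s₁ : S₁, dChan (V₁ s₁) (V₂ s₂))
           (⨆ s₁ : S₁, ⨅ s₂ : S₂, dChan (V₁ s₁) (V₂ s₂)))

/-- The per-`n` compound secrecy expression
`F_n(𝔚) = (1/n)·sup_{U,E} ( inf_s I(U;Yⁿ_s) − sup_s I(U;Zⁿ_s) )`, where the supremum ranges
over all finite auxiliary sets `U` (represented by `Fin (k+1)`) and stochastic encoders `E`. -/
noncomputable def secF {X Y Z : Type*} [Fintype X] [Fintype Y] [Fintype Z] {S : Type*}
    (W : S → X → Y → ℝ) (V : S → X → Z → ℝ) (n : ℕ) : ℝ :=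
  (1 / (n : ℝ)) * sSup {r : ℝ | ∃ (k : ℕ) (E : Fin (k + 1) → (Fin n → X) → ℝ),
    (∀ u, (∀ xn, 0 ≤ E u xn) ∧ ∑ xn : Fin n → X, E u xn = 1) ∧
    r = (⨅ s : S, mutInf (jointOut n (W s) E)) - ⨆ s : S, mutInf (jointOut n (V s) E)}

universe u v z w

noncomputable def eta (t : ℝ) : ℝ := -(t * Real.logb 2 t)

lemma eta_def' (t : ℝ) : eta t = Real.negMulLog t / Real.log 2 := by
  simp only [eta, Real.negMulLog, Real.logb]
  ring

@[simp] lemma eta_zero : eta 0 = 0 := by simp [eta]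
@[simp] lemma eta_one : eta 1 = 0 := by simp [eta]

lemma eta_nonneg {t : ℝ} (h0 : 0 ≤ t) (h1 : t ≤ 1) : 0 ≤ eta t := by
  rw [eta_def']
  exact div_nonneg (Real.negMulLog_nonneg h0 h1) (Real.log_nonneg one_le_two)

lemma eta_mul (s t : ℝ) : eta (s * t) = s * eta t + t * eta s := by
  rcases eq_or_ne s 0 with rfl | hs
  · simp
  rcases eq_or_ne t 0 with rfl | ht
  · simp
  rw [eta, eta, eta, Real.logb, Real.logb, Real.logb, Real.log_mul hs ht]
  ring

lemma eta_subadd {s t : ℝ} (hs : 0 ≤ s) (ht : 0 ≤ t) : eta (s + t) ≤ eta s + eta t := by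
  have key : ∀ a b : ℝ, 0 ≤ a → 0 ≤ b → -(a * Real.logb 2 (a + b)) ≤ eta a := by
    intro a b ha hb
    rcases ha.eq_or_lt with rfl | ha'
    · simp [eta]
    · rw [eta, neg_le_neg_iff]
      have := Real.logb_le_logb_of_le (b := 2) one_lt_two ha' (le_add_of_nonneg_right hb)
      nlinarith [this]
  have h1 := key s t hs ht
  have h2 := key t s ht hs
  rw [add_comm t s] at h2
  have : eta (s + t) = -(s * Real.logb 2 (s+t)) + -(t * Real.logb 2 (s+t)) := by
    rw [eta]; ring
  linarith

lemma eta_concave {a b p q : ℝ} (ha : 0 ≤ a) (hb : 0 ≤ b) (hp : 0 ≤ p) (hq : 0 ≤ q)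
    (hpq : p + q = 1) : p * eta a + q * eta b ≤ eta (p * a + q * b) := by
  have h := Real.concaveOn_negMulLog.2 (Set.mem_Ici.mpr ha) (Set.mem_Ici.mpr hb) hp hq hpq
  simp only [smul_eq_mul] at h
  have hlog : 0 < Real.log 2 := Real.log_pos one_lt_two
  rw [eta_def', eta_def', eta_def']
  calc p * (Real.negMulLog a / Real.log 2) + q * (Real.negMulLog b / Real.log 2)
      = (p * Real.negMulLog a + q * Real.negMulLog b) / Real.log 2 := by ring
    _ ≤ Real.negMulLog (p * a + q * b) / Real.log 2 := by
        gcongr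

noncomputable def ent {T : Type*} [Fintype T] (f : T → ℝ) : ℝ := ∑ t, eta (f t)

lemma ent_reindex {T T' : Type*} [Fintype T] [Fintype T'] (e : T ≃ T') (f : T' → ℝ) :
    ent (fun t => f (e t)) = ent f := Fintype.sum_equiv e _ _ (fun _ => rfl)

lemma ent_nonneg {T : Type*} [Fintype T] (f : T → ℝ) (h0 : ∀ t, 0 ≤ f t)
    (h1 : ∑ t, f t ≤ 1) : 0 ≤ ent f := by
  refine Finset.sum_nonneg fun t _ => eta_nonneg (h0 t) ?_
  calc f t ≤ ∑ t, f t := Finset.single_le_sum (fun t _ => h0 t) (Finset.mem_univ t)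
    _ ≤ 1 := h1

lemma eta_le_aux {a c : ℝ} (ha : 0 ≤ a) (hc : 0 < c) :
    eta a ≤ a * Real.logb 2 c + (1/c - a)/Real.log 2 := by
  have hlog : 0 < Real.log 2 := Real.log_pos one_lt_two
  rcases ha.eq_or_lt with rfl | ha'
  · simp [eta]
    positivity
  · have hac : 0 < a * c := mul_pos ha' hc
    have h := Real.log_le_sub_one_of_pos (x := 1/(a*c)) (by positivity)
    rw [Real.log_div one_ne_zero hac.ne', Real.log_one] at h
    have h2 : -Real.log (a*c) ≤ 1/(a*c) - 1 := by linarith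
    rw [Real.log_mul ha'.ne' hc.ne'] at h2
    -- eta a = -(a * log a / log 2)
    rw [eta, Real.logb, Real.logb]
    have hmul := mul_le_mul_of_nonneg_left h2 ha'.le
    have hfield : a * (1/(a*c)) = 1/c := by field_simp
    rw [mul_sub, hfield] at hmul
    have key : -(a * Real.log a) ≤ a * Real.log c + (1/c - a) := by nlinarith [hmul]
    calc -(a * (Real.log a / Real.log 2)) = (-(a * Real.log a))/Real.log 2 := by ring
      _ ≤ (a * Real.log c + (1/c - a))/Real.log 2 := by gcongr
      _ = a * (Real.log c / Real.log 2) + (1/c - a)/Real.log 2 := by ring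

lemma ent_le_logb_card {T : Type*} [Fintype T] (p : T → ℝ) (h0 : ∀ t, 0 ≤ p t)
    (h1 : ∑ t, p t = 1) : ent p ≤ Real.logb 2 (Fintype.card T) := by
  have hT : 0 < (Fintype.card T : ℝ) := by
    have : Nonempty T := by
      by_contra h
      rw [not_nonempty_iff] at h
      rw [Finset.univ_eq_empty, Finset.sum_empty] at h1
      norm_num at h1
    exact_mod_cast Fintype.card_pos
  calc ent p ≤ ∑ t, (p t * Real.logb 2 (Fintype.card T) +
        (1/(Fintype.card T : ℝ) - p t)/Real.log 2) :=
        Finset.sum_le_sum fun t _ => eta_le_aux (h0 t) hT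
    _ = Real.logb 2 (Fintype.card T) := by
        rw [Finset.sum_add_distrib, ← Finset.sum_mul, h1, one_mul, ← Finset.sum_div]
        rw [Finset.sum_sub_distrib, h1, Finset.sum_const, Finset.card_univ, nsmul_eq_mul]
        rw [mul_one_div, div_self hT.ne']
        simp

lemma eta_sum_le {ι : Type*} (s : Finset ι) (f : ι → ℝ) (h0 : ∀ i ∈ s, 0 ≤ f i) :
    eta (∑ i ∈ s, f i) ≤ ∑ i ∈ s, eta (f i) := by
  have hS : eta (∑ i ∈ s, f i) = ∑ i ∈ s, -(f i * Real.logb 2 (∑ j ∈ s, f j)) := by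
    rw [eta, Finset.sum_mul, ← Finset.sum_neg_distrib]
  rw [hS]
  refine Finset.sum_le_sum fun i hi => ?_
  rcases (h0 i hi).eq_or_lt with h | h
  · simp [← h]
  · rw [eta, neg_le_neg_iff]
    have hle : f i ≤ ∑ j ∈ s, f j := Finset.single_le_sum h0 hi
    exact mul_le_mul_of_nonneg_left (Real.logb_le_logb_of_le one_lt_two h hle) (le_of_lt h)

lemma H2_eq (ε : ℝ) : H2 ε = eta ε + eta (1-ε) := by
  simp only [H2, eta]; ring

lemma ent_fannes {Y : Type*} [Fintype Y] {ε : ℝ} (hε0 : 0 < ε) (hε1 : ε < 1)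
    (p q : Y → ℝ) (hp0 : ∀ y, 0 ≤ p y) (hq0 : ∀ y, 0 ≤ q y)
    (hp1 : ∑ y, p y = 1) (hq1 : ∑ y, q y = 1) (hd : ∑ y, |p y - q y| ≤ ε) :
    ent p - ent q ≤ ε * Real.logb 2 (Fintype.card Y) + H2 ε := by
  set m : Y → ℝ := fun y => min (p y) (q y) with hm
  set c : ℝ := ∑ y, m y with hc
  have habs : ∀ y, |p y - q y| = p y + q y - 2 * m y := by
    intro y
    rcases le_total (p y) (q y) with h | h
    · rw [abs_of_nonpos (by linarith), hm]; simp [min_eq_left h]; ring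
    · rw [abs_of_nonneg (by linarith), hm]; simp [min_eq_right h]; ring
  have hsum : ∑ y, |p y - q y| = 2 - 2 * c := by
    have h : ∑ y, |p y - q y| = ∑ y, (p y + q y - 2 * m y) :=
      Finset.sum_congr rfl fun y _ => habs y
    rw [h, Finset.sum_sub_distrib, Finset.sum_add_distrib, hp1, hq1, ← Finset.mul_sum, ← hc]
    ring
  have hcge : 1 - ε ≤ c := by rw [hsum] at hd; linarith
  have hc0 : 0 < c := by linarith
  have hm0 : ∀ y, 0 ≤ m y := fun y => le_min (hp0 y) (hq0 y)
  set rr : Y → ℝ := fun y => m y / c with hrr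
  have hrr0 : ∀ y, 0 ≤ rr y := fun y => div_nonneg (hm0 y) hc0.le
  have hrr1 : ∑ y, rr y = 1 := by
    rw [hrr, ← Finset.sum_div, ← hc, div_self hc0.ne']
  set p' : Y → ℝ := fun y => (p y - (1-ε) * rr y)/ε with hp'
  set q' : Y → ℝ := fun y => (q y - (1-ε) * rr y)/ε with hq'
  have hrm : ∀ y, (1-ε) * rr y ≤ m y := by
    intro y
    rw [hrr]
    rw [mul_div_assoc', div_le_iff₀ hc0]
    have := hm0 y
    nlinarith [hcge, this]
  have hp'0 : ∀ y, 0 ≤ p' y := by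
    intro y
    apply div_nonneg _ hε0.le
    have : m y ≤ p y := min_le_left _ _
    linarith [hrm y]
  have hq'0 : ∀ y, 0 ≤ q' y := by
    intro y
    apply div_nonneg _ hε0.le
    have : m y ≤ q y := min_le_right _ _
    linarith [hrm y]
  have hp'1 : ∑ y, p' y = 1 := by
    rw [hp', ← Finset.sum_div, Finset.sum_sub_distrib, ← Finset.mul_sum, hrr1, hp1]
    field_simp
    ring
  have hq'1 : ∑ y, q' y = 1 := by
    rw [hq', ← Finset.sum_div, Finset.sum_sub_distrib, ← Finset.mul_sum, hrr1, hq1]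
    field_simp
    ring
  have hpdec : ∀ y, p y = (1-ε) * rr y + ε * p' y := by
    intro y; rw [hp']; field_simp; ring
  have hqdec : ∀ y, q y = (1-ε) * rr y + ε * q' y := by
    intro y; rw [hq']; field_simp; ring
  have hub : ent p ≤ (1-ε) * ent rr + eta (1-ε) + (ε * ent p' + eta ε) := by
    have hyb : ∀ y, eta (p y) ≤ ((1-ε) * eta (rr y) + rr y * eta (1-ε))
        + (ε * eta (p' y) + p' y * eta ε) := by
      intro y
      rw [hpdec y]
      calc eta ((1-ε) * rr y + ε * p' y) ≤ eta ((1-ε) * rr y) + eta (ε * p' y) :=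
            eta_subadd (mul_nonneg (by linarith) (hrr0 y)) (mul_nonneg hε0.le (hp'0 y))
        _ = _ := by rw [eta_mul, eta_mul]
    calc ent p ≤ ∑ y, (((1-ε) * eta (rr y) + rr y * eta (1-ε))
        + (ε * eta (p' y) + p' y * eta ε)) := Finset.sum_le_sum fun y _ => hyb y
      _ = (1-ε) * ent rr + eta (1-ε) + (ε * ent p' + eta ε) := by
          rw [Finset.sum_add_distrib, Finset.sum_add_distrib, Finset.sum_add_distrib,
            ← Finset.mul_sum, ← Finset.mul_sum, ← Finset.sum_mul, ← Finset.sum_mul,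
            hrr1, hp'1, one_mul, one_mul]
          rfl
  have hlb : (1-ε) * ent rr + ε * ent q' ≤ ent q := by
    have hyb : ∀ y, (1-ε) * eta (rr y) + ε * eta (q' y) ≤ eta (q y) := by
      intro y
      rw [hqdec y]
      exact eta_concave (hrr0 y) (hq'0 y) (by linarith) hε0.le (by ring)
    calc (1-ε) * ent rr + ε * ent q'
        = ∑ y, ((1-ε) * eta (rr y) + ε * eta (q' y)) := by
          rw [Finset.sum_add_distrib, ← Finset.mul_sum, ← Finset.mul_sum]; rfl
      _ ≤ ent q := Finset.sum_le_sum fun y _ => hyb y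
  have h1 : ent p' ≤ Real.logb 2 (Fintype.card Y) := ent_le_logb_card p' hp'0 hp'1
  have h2 : 0 ≤ ent q' := ent_nonneg q' hq'0 hq'1.le
  rw [H2_eq]
  nlinarith [hub, hlb, h1, h2, hε0]

/-- Output distribution over `A × Yⁿ` from weight `μ` on `A × Xⁿ` and memoryless channel. -/
noncomputable def outC {X Y A : Type*} [Fintype X] (n : ℕ) (W : X → Y → ℝ)
    (μ : A × (Fin n → X) → ℝ) : A × (Fin n → Y) → ℝ :=
  fun p => ∑ xn : Fin n → X, μ (p.1, xn) * ∏ i : Fin n, W (xn i) (p.2 i)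

lemma sum_prod_one {X Y : Type*} [Fintype X] [Fintype Y] {W : X → Y → ℝ}
    (hW : IsChannel W) (n : ℕ) (x : Fin n → X) :
    ∑ g : Fin n → Y, ∏ i : Fin n, W (x i) (g i) = 1 := by
  classical
  have h := Finset.prod_univ_sum (t := fun _ : Fin n => (Finset.univ : Finset Y))
    (f := fun i y => W (x i) y)
  rw [Fintype.piFinset_univ] at h
  rw [← h]
  exact Finset.prod_eq_one fun i _ => (hW (x i)).2

/-- Fannes-type continuity for the output of one channel use with side information `C`. -/
lemma ent_step {C X Y : Type*} [Fintype C] [Fintype X] [Fintype Y] {ε : ℝ}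
    (hε0 : 0 < ε) (hε1 : ε < 1) (T T' : X → Y → ℝ) (hT : IsChannel T) (hT' : IsChannel T')
    (hd : ∀ x, ∑ y, |T x y - T' x y| ≤ ε)
    (G : C → X → ℝ) (hG0 : ∀ c x, 0 ≤ G c x) (hG1 : ∑ c, ∑ x, G c x = 1) :
    |ent (fun cy : C × Y => ∑ x, G cy.1 x * T x cy.2)
      - ent (fun cy : C × Y => ∑ x, G cy.1 x * T' x cy.2)|
      ≤ ε * Real.logb 2 (Fintype.card Y) + H2 ε := by
  set L := ε * Real.logb 2 (Fintype.card Y) + H2 ε with hL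
  set pc : C → ℝ := fun c => ∑ x, G c x with hpc
  have hpc0 : ∀ c, 0 ≤ pc c := fun c => Finset.sum_nonneg fun x _ => hG0 c x
  set F : C → Y → ℝ := fun c y => ∑ x, G c x * T x y with hF
  set F' : C → Y → ℝ := fun c y => ∑ x, G c x * T' x y with hF'
  have hFsum : ∀ c, ∑ y, F c y = pc c := by
    intro c
    rw [hF, Finset.sum_comm]
    exact Finset.sum_congr rfl fun x _ => by
      rw [← Finset.mul_sum, (hT x).2, mul_one]
  have hF'sum : ∀ c, ∑ y, F' c y = pc c := by
    intro c
    rw [hF', Finset.sum_comm]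
    exact Finset.sum_congr rfl fun x _ => by
      rw [← Finset.mul_sum, (hT' x).2, mul_one]
  have hF0 : ∀ c y, 0 ≤ F c y :=
    fun c y => Finset.sum_nonneg fun x _ => mul_nonneg (hG0 c x) ((hT x).1 y)
  have hF'0 : ∀ c y, 0 ≤ F' c y :=
    fun c y => Finset.sum_nonneg fun x _ => mul_nonneg (hG0 c x) ((hT' x).1 y)
  have hclose : ∀ c, ∑ y, |F c y - F' c y| ≤ ε * pc c := by
    intro c
    have h1 : ∀ y, |F c y - F' c y| ≤ ∑ x, G c x * |T x y - T' x y| := by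
      intro y
      rw [hF, hF', ← Finset.sum_sub_distrib]
      refine (Finset.abs_sum_le_sum_abs _ _).trans ?_
      refine Finset.sum_le_sum fun x _ => ?_
      rw [← mul_sub, abs_mul, abs_of_nonneg (hG0 c x)]
    calc ∑ y, |F c y - F' c y| ≤ ∑ y, ∑ x, G c x * |T x y - T' x y| :=
          Finset.sum_le_sum fun y _ => h1 y
      _ = ∑ x, G c x * ∑ y, |T x y - T' x y| := by
          rw [Finset.sum_comm]
          exact Finset.sum_congr rfl fun x _ => by rw [← Finset.mul_sum]
      _ ≤ ∑ x, G c x * ε := Finset.sum_le_sum fun x _ =>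
          mul_le_mul_of_nonneg_left (hd x) (hG0 c x)
      _ = ε * pc c := by rw [← Finset.sum_mul, hpc]; ring
  -- per-c bound
  have hkey : ∀ c, |(∑ y, eta (F c y)) - ∑ y, eta (F' c y)| ≤ pc c * L := by
    intro c
    rcases (hpc0 c).eq_or_lt with h0 | h0
    · have hz : ∀ x, G c x = 0 := by
        intro x
        have := Finset.sum_eq_zero_iff_of_nonneg (fun x _ => hG0 c x) |>.mp h0.symm
        exact this x (Finset.mem_univ x)
      have : F c = fun _ => 0 := by funext y; rw [hF]; exact Finset.sum_eq_zero fun x _ => by rw [hz x, zero_mul]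
      have h2 : F' c = fun _ => 0 := by funext y; rw [hF']; exact Finset.sum_eq_zero fun x _ => by rw [hz x, zero_mul]
      rw [this, h2, ← h0]
      simp
    · -- normalize
      set pn : Y → ℝ := fun y => F c y / pc c with hpn
      set qn : Y → ℝ := fun y => F' c y / pc c with hqn
      have hsc : ∀ (G : Y → ℝ), (∀ y, 0 ≤ G y) → (∑ y, G y = pc c) →
          ∑ y, eta (G y) = pc c * ent (fun y => G y / pc c) + eta (pc c) := by
        intro G hG0' hG1'
        have : ∀ y, eta (G y) = pc c * eta (G y / pc c) + (G y / pc c) * eta (pc c) := by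
          intro y
          have : G y = pc c * (G y / pc c) := by field_simp
          rw [this, eta_mul]
          congr 2
          · field_simp
          · field_simp
        rw [Finset.sum_congr rfl fun y _ => this y, Finset.sum_add_distrib,
          ← Finset.mul_sum, ← Finset.sum_mul, ← Finset.sum_div, hG1', div_self h0.ne', one_mul]
        rfl
      have e1 := hsc (F c) (hF0 c) (hFsum c)
      have e2 := hsc (F' c) (hF'0 c) (hF'sum c)
      rw [e1, e2]
      have hd' : ∑ y, |pn y - qn y| ≤ ε := by
        rw [hpn, hqn]
        have : ∀ y, |F c y / pc c - F' c y / pc c| = |F c y - F' c y| / pc c := by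
          intro y; rw [← sub_div, abs_div, abs_of_nonneg (hpc0 c)]
        rw [Finset.sum_congr rfl fun y _ => this y, ← Finset.sum_div,
          div_le_iff₀ h0]
        calc ∑ y, |F c y - F' c y| ≤ ε * pc c := hclose c
          _ = ε * pc c := rfl
      have hpn0 : ∀ y, 0 ≤ pn y := fun y => div_nonneg (hF0 c y) (hpc0 c)
      have hqn0 : ∀ y, 0 ≤ qn y := fun y => div_nonneg (hF'0 c y) (hpc0 c)
      have hpn1 : ∑ y, pn y = 1 := by rw [hpn, ← Finset.sum_div, hFsum c, div_self h0.ne']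
      have hqn1 : ∑ y, qn y = 1 := by rw [hqn, ← Finset.sum_div, hF'sum c, div_self h0.ne']
      have b1 := ent_fannes hε0 hε1 pn qn hpn0 hqn0 hpn1 hqn1 hd'
      have b2 := ent_fannes hε0 hε1 qn pn hqn0 hpn0 hqn1 hpn1 (by
        rw [Finset.sum_congr rfl fun y _ => abs_sub_comm (qn y) (pn y)]; exact hd')
      have : |ent pn - ent qn| ≤ L := abs_sub_le_iff.mpr ⟨b1, b2⟩
      calc |(pc c * ent pn + eta (pc c)) - (pc c * ent qn + eta (pc c))|
          = pc c * |ent pn - ent qn| := by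
            rw [show (pc c * ent pn + eta (pc c)) - (pc c * ent qn + eta (pc c))
              = pc c * (ent pn - ent qn) by ring, abs_mul, abs_of_nonneg (hpc0 c)]
        _ ≤ pc c * L := mul_le_mul_of_nonneg_left this (hpc0 c)
  -- assemble
  have hsplit : ∀ (H : C × Y → ℝ), ent H = ∑ c, ∑ y, eta (H (c, y)) := by
    intro H
    rw [ent, Fintype.sum_prod_type]
  rw [hsplit, hsplit]
  calc |(∑ c, ∑ y, eta (F c y)) - ∑ c, ∑ y, eta (F' c y)|
      = |∑ c, ((∑ y, eta (F c y)) - ∑ y, eta (F' c y))| := by rw [Finset.sum_sub_distrib]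
    _ ≤ ∑ c, |(∑ y, eta (F c y)) - ∑ y, eta (F' c y)| := Finset.abs_sum_le_sum_abs _ _
    _ ≤ ∑ c, pc c * L := Finset.sum_le_sum fun c _ => hkey c
    _ = L := by
        rw [← Finset.sum_mul, hpc, hG1, one_mul]

def midEquiv (A Y Z : Type*) : (A × Y) × Z ≃ (A × Z) × Y where
  toFun p := ((p.1.1, p.2), p.1.2)
  invFun p := ((p.1.1, p.2), p.1.2)
  left_inv := by rintro ⟨⟨a,y⟩,z⟩; rfl
  right_inv := by rintro ⟨⟨a,z⟩,y⟩; rfl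

/-- Split off coordinate zero. -/
def splitEquiv (A Y : Type*) (n : ℕ) : A × (Fin (n+1) → Y) ≃ (A × Y) × (Fin n → Y) where
  toFun p := ((p.1, p.2 0), fun i => p.2 i.succ)
  invFun p := (p.1.1, Fin.cons p.1.2 p.2)
  left_inv := by
    rintro ⟨a, g⟩
    simp only []
    refine Prod.ext rfl ?_
    exact Fin.cons_self_tail g
  right_inv := by
    rintro ⟨⟨a, y⟩, g⟩
    simp [Fin.cons_zero, Fin.cons_succ]

noncomputable def pushA {X Y A : Type*} [Fintype X] (n : ℕ) (T : X → Y → ℝ)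
    (μ : A × (Fin (n+1) → X) → ℝ) : (A × Y) × (Fin n → X) → ℝ :=
  fun p => ∑ x0 : X, μ (p.1.1, Fin.cons x0 p.2) * T x0 p.1.2

lemma sum_cons_reindex {X : Type*} [Fintype X] (n : ℕ) {M : Type*} [AddCommMonoid M]
    (f : (Fin (n+1) → X) → M) :
    ∑ x : Fin (n+1) → X, f x = ∑ x0 : X, ∑ xr : Fin n → X, f (Fin.cons x0 xr) := by
  have h := Fintype.sum_equiv (Fin.consEquiv (fun _ => X))
    (fun p : X × (Fin n → X) => f (Fin.cons p.1 p.2)) f (fun p => rfl)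
  rw [← h, Fintype.sum_prod_type]

lemma outC_push {X Y A : Type*} [Fintype X] [Fintype Y] (n : ℕ) (R T : X → Y → ℝ)
    (μ : A × (Fin (n+1) → X) → ℝ) (q : (A × Y) × (Fin n → Y)) :
    outC n R (pushA n T μ) q
      = ∑ x : Fin (n+1) → X, μ (q.1.1, x) * (T (x 0) q.1.2 * ∏ i, R (x i.succ) (q.2 i)) := by
  rw [sum_cons_reindex]
  simp only [Fin.cons_zero, Fin.cons_succ]
  rw [outC]
  simp only [pushA, Finset.sum_mul]
  rw [Finset.sum_comm]
  exact Finset.sum_congr rfl fun x0 _ => Finset.sum_congr rfl fun xr _ => by ring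

lemma core {X : Type u} {Y : Type v} [Fintype X] [Fintype Y] {ε : ℝ} (hε0 : 0 < ε) (hε1 : ε < 1)
    (W W' : X → Y → ℝ) (hW : IsChannel W) (hW' : IsChannel W')
    (hd : ∀ x, ∑ y, |W x y - W' x y| ≤ ε) :
    ∀ (n : ℕ) (A : Type (max v w)) (_ : Fintype A) (μ : A × (Fin n → X) → ℝ),
      (∀ p, 0 ≤ μ p) → (∑ p, μ p = 1) →
      |ent (outC n W μ) - ent (outC n W' μ)|
        ≤ n * (ε * Real.logb 2 (Fintype.card Y) + H2 ε) := by
  intro n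
  induction n with
  | zero =>
    intro A instA μ h0 h1
    have : outC 0 W μ = outC 0 W' μ := by
      funext p
      simp [outC]
    rw [this]
    simp
  | succ n ih =>
    intro A instA μ h0 h1
    set L := ε * Real.logb 2 (Fintype.card Y) + H2 ε with hLdef
    have hpush0 : ∀ (T : X → Y → ℝ), IsChannel T → ∀ p, 0 ≤ pushA n T μ p := by
      intro T hT p
      exact Finset.sum_nonneg fun x0 _ => mul_nonneg (h0 _) ((hT x0).1 _)
    have hpush1 : ∀ (T : X → Y → ℝ), IsChannel T → ∑ p, pushA n T μ p = 1 := by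
      intro T hT
      have key : ∀ a : A, (∑ y : Y, ∑ xr : Fin n → X, ∑ x0 : X,
          μ (a, Fin.cons x0 xr) * T x0 y) = ∑ x : Fin (n+1) → X, μ (a, x) := by
        intro a
        rw [Finset.sum_comm]
        have h2 : ∀ xr : Fin n → X, (∑ y : Y, ∑ x0 : X, μ (a, Fin.cons x0 xr) * T x0 y)
            = ∑ x0 : X, μ (a, Fin.cons x0 xr) := by
          intro xr
          rw [Finset.sum_comm]
          refine Finset.sum_congr rfl fun x0 _ => ?_
          rw [← Finset.mul_sum, (hT x0).2, mul_one]
        rw [Finset.sum_congr rfl fun xr _ => h2 xr]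
        rw [sum_cons_reindex n (fun x => μ (a, x)), Finset.sum_comm]
      calc ∑ p : (A × Y) × (Fin n → X), pushA n T μ p
          = ∑ a : A, ∑ y : Y, ∑ xr : Fin n → X, ∑ x0 : X,
              μ (a, Fin.cons x0 xr) * T x0 y := by
            rw [Fintype.sum_prod_type, Fintype.sum_prod_type]
            rfl
        _ = ∑ a : A, ∑ x : Fin (n+1) → X, μ (a, x) :=
            Finset.sum_congr rfl fun a _ => key a
        _ = 1 := by rw [← Fintype.sum_prod_type]; exact h1
    have hfun : ∀ (T : X → Y → ℝ), outC (n+1) T μ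
        = (outC n T (pushA n T μ)) ∘ (splitEquiv A Y n) := by
      intro T
      funext p
      obtain ⟨a, g⟩ := p
      show outC (n+1) T μ (a,g) = outC n T (pushA n T μ) ((a, g 0), fun i => g i.succ)
      rw [outC_push]
      rw [outC]
      refine Finset.sum_congr rfl fun x _ => ?_
      rw [Fin.prod_univ_succ]
    have hentT : ∀ T : X → Y → ℝ, ent (outC (n+1) T μ) = ent (outC n T (pushA n T μ)) := by
      intro T
      rw [hfun T]
      exact ent_reindex (splitEquiv A Y n) (outC n T (pushA n T μ))
    set G : (A × (Fin n → Y)) → X → ℝ :=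
      fun c x0 => ∑ xr : Fin n → X, μ (c.1, Fin.cons x0 xr) * ∏ i, W (xr i) (c.2 i) with hGdef
    have houtT : ∀ (T : X → Y → ℝ), outC n W (pushA n T μ)
        = fun q : (A × Y) × (Fin n → Y) => ∑ x0, G (q.1.1, q.2) x0 * T x0 q.1.2 := by
      intro T
      funext q
      rw [outC_push, sum_cons_reindex]
      simp only [Fin.cons_zero, Fin.cons_succ, hGdef, Finset.sum_mul]
      refine Finset.sum_congr rfl fun x0 _ => Finset.sum_congr rfl fun xr _ => by ring
    have hentE : ∀ T : X → Y → ℝ, ent (outC n W (pushA n T μ))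
        = ent (fun cy : (A × (Fin n → Y)) × Y => ∑ x0, G cy.1 x0 * T x0 cy.2) := by
      intro T
      rw [houtT T]
      exact ent_reindex (midEquiv A Y (Fin n → Y))
        (fun cy : (A × (Fin n → Y)) × Y => ∑ x0, G cy.1 x0 * T x0 cy.2)
    have hG0 : ∀ c x0, 0 ≤ G c x0 := by
      intro c x0
      refine Finset.sum_nonneg fun xr _ => mul_nonneg (h0 _) ?_
      exact Finset.prod_nonneg fun i _ => (hW (xr i)).1 _
    have hG1 : ∑ c : A × (Fin n → Y), ∑ x0 : X, G c x0 = 1 := by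
      have key : ∀ a : A, (∑ g : Fin n → Y, ∑ x0 : X, G (a, g) x0)
          = ∑ x : Fin (n+1) → X, μ (a, x) := by
        intro a
        calc ∑ g : Fin n → Y, ∑ x0 : X, G (a, g) x0
            = ∑ x0 : X, ∑ xr : Fin n → X, μ (a, Fin.cons x0 xr) *
                ∑ g : Fin n → Y, ∏ i, W (xr i) (g i) := by
              rw [Finset.sum_comm]
              refine Finset.sum_congr rfl fun x0 _ => ?_
              rw [hGdef, Finset.sum_comm]
              exact Finset.sum_congr rfl fun xr _ => by simp [Finset.mul_sum]
          _ = ∑ x0 : X, ∑ xr : Fin n → X, μ (a, Fin.cons x0 xr) := by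
              refine Finset.sum_congr rfl fun x0 _ => Finset.sum_congr rfl fun xr _ => ?_
              rw [sum_prod_one hW n xr, mul_one]
          _ = ∑ x : Fin (n+1) → X, μ (a, x) := (sum_cons_reindex n (fun x => μ (a, x))).symm
      calc ∑ c : A × (Fin n → Y), ∑ x0 : X, G c x0
          = ∑ a : A, ∑ g : Fin n → Y, ∑ x0 : X, G (a, g) x0 := by
            rw [Fintype.sum_prod_type]
        _ = ∑ a : A, ∑ x : Fin (n+1) → X, μ (a, x) :=
            Finset.sum_congr rfl fun a _ => key a
        _ = 1 := by rw [← Fintype.sum_prod_type]; exact h1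
    have stepA := ent_step hε0 hε1 W W' hW hW' hd G hG0 hG1
    have stepB := ih (A × Y) inferInstance (pushA n W' μ) (hpush0 W' hW') (hpush1 W' hW')
    have eq1 := hentT W
    have eq2 := hentT W'
    have eq3 := hentE W
    have eq4 := hentE W'
    rw [eq1, eq2]
    have habs : |ent (outC n W (pushA n W μ)) - ent (outC n W' (pushA n W' μ))|
        ≤ |ent (outC n W (pushA n W μ)) - ent (outC n W (pushA n W' μ))|
          + |ent (outC n W (pushA n W' μ)) - ent (outC n W' (pushA n W' μ))| :=
      abs_sub_le _ _ _
    have hA : |ent (outC n W (pushA n W μ)) - ent (outC n W (pushA n W' μ))| ≤ L := by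
      rw [eq3, eq4]
      exact stepA
    push_cast
    calc |ent (outC n W (pushA n W μ)) - ent (outC n W' (pushA n W' μ))|
        ≤ |ent (outC n W (pushA n W μ)) - ent (outC n W (pushA n W' μ))|
          + |ent (outC n W (pushA n W' μ)) - ent (outC n W' (pushA n W' μ))| := habs
      _ ≤ L + (n : ℝ) * L := add_le_add hA stepB
      _ = ((n : ℝ) + 1) * L := by ring

lemma mutInf_eq {U Y : Type*} [Fintype U] [Fintype Y] (P : U × Y → ℝ) (h0 : ∀ p, 0 ≤ P p) :
    mutInf P = ent (fun u => ∑ y, P (u, y)) + ent (fun y => ∑ u, P (u, y)) - ent P := by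
  classical
  set a : U → ℝ := fun u => ∑ y, P (u, y) with ha
  set b : Y → ℝ := fun y => ∑ u, P (u, y) with hb
  have key : ∀ u y, P (u,y) * Real.logb 2 (P (u,y) / (a u * b y))
      = P (u,y) * Real.logb 2 (P (u,y)) - P (u,y) * Real.logb 2 (a u)
        - P (u,y) * Real.logb 2 (b y) := by
    intro u y
    rcases (h0 (u,y)).eq_or_lt with h | h
    · rw [← h]; ring
    · have hau : 0 < a u :=
        lt_of_lt_of_le h (Finset.single_le_sum (fun y' _ => h0 (u,y')) (Finset.mem_univ y))
      have hbv : 0 < b y :=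
        lt_of_lt_of_le h (Finset.single_le_sum (fun u' _ => h0 (u',y)) (Finset.mem_univ u))
      rw [Real.logb_div h.ne' (by positivity), Real.logb_mul hau.ne' hbv.ne']
      ring
  have hm : mutInf P = (∑ u, ∑ y, P (u,y) * Real.logb 2 (P (u,y)))
      - (∑ u, ∑ y, P (u,y) * Real.logb 2 (a u))
      - (∑ u, ∑ y, P (u,y) * Real.logb 2 (b y)) := by
    rw [mutInf, ← Finset.sum_sub_distrib, ← Finset.sum_sub_distrib]
    refine Finset.sum_congr rfl fun u _ => ?_
    rw [← Finset.sum_sub_distrib, ← Finset.sum_sub_distrib]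
    exact Finset.sum_congr rfl fun y _ => key u y
  have s1 : (∑ u, ∑ y, P (u,y) * Real.logb 2 (P (u,y))) = - ent P := by
    rw [ent, Fintype.sum_prod_type, ← Finset.sum_neg_distrib]
    refine Finset.sum_congr rfl fun u _ => ?_
    rw [← Finset.sum_neg_distrib]
    exact Finset.sum_congr rfl fun y _ => by rw [eta]; ring
  have s2 : (∑ u, ∑ y, P (u,y) * Real.logb 2 (a u)) = - ent a := by
    rw [ent, ← Finset.sum_neg_distrib]
    refine Finset.sum_congr rfl fun u _ => ?_
    rw [← Finset.sum_mul, eta]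
    ring
  have s3 : (∑ u, ∑ y, P (u,y) * Real.logb 2 (b y)) = - ent b := by
    rw [Finset.sum_comm, ent, ← Finset.sum_neg_distrib]
    refine Finset.sum_congr rfl fun y _ => ?_
    rw [← Finset.sum_mul, eta]
    ring
  rw [hm, s1, s2, s3]
  ring

lemma mutInf_nonneg {U Y : Type*} [Fintype U] [Fintype Y] (P : U × Y → ℝ)
    (h0 : ∀ p, 0 ≤ P p) (h1 : ∑ p, P p = 1) : 0 ≤ mutInf P := by
  classical
  set a : U → ℝ := fun u => ∑ y, P (u, y) with ha
  set b : Y → ℝ := fun y => ∑ u, P (u, y) with hb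
  have ha0 : ∀ u, 0 ≤ a u := fun u => Finset.sum_nonneg fun y _ => h0 _
  have hb0 : ∀ y, 0 ≤ b y := fun y => Finset.sum_nonneg fun u _ => h0 _
  have hlog : 0 < Real.log 2 := Real.log_pos one_lt_two
  have key : ∀ u y, (P (u,y) - a u * b y) / Real.log 2
      ≤ P (u,y) * Real.logb 2 (P (u,y) / (a u * b y)) := by
    intro u y
    rcases (h0 (u,y)).eq_or_lt with h | h
    · rw [← h]
      simp only [zero_mul, zero_sub, neg_div]
      have h2 : 0 ≤ a u * b y / Real.log 2 :=
        div_nonneg (mul_nonneg (ha0 u) (hb0 y)) hlog.le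
      linarith
    · have hau : 0 < a u :=
        lt_of_lt_of_le h (Finset.single_le_sum (fun y' _ => h0 (u,y')) (Finset.mem_univ y))
      have hbv : 0 < b y :=
        lt_of_lt_of_le h (Finset.single_le_sum (fun u' _ => h0 (u',y)) (Finset.mem_univ u))
      have hab : 0 < a u * b y := mul_pos hau hbv
      have hlg := Real.log_le_sub_one_of_pos (x := a u * b y / P (u,y)) (by positivity)
      have hrw : Real.log (a u * b y / P (u,y)) = - Real.log (P (u,y) / (a u * b y)) := by
        rw [← Real.log_inv]
        congr 1
        field_simp
      rw [hrw] at hlg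
      have hmul := mul_le_mul_of_nonneg_left hlg h.le
      have hPQ : P (u,y) * (a u * b y / P (u,y)) = a u * b y := by field_simp
      rw [mul_sub, hPQ, mul_one, mul_neg] at hmul
      calc (P (u,y) - a u * b y)/Real.log 2
          ≤ (P (u,y) * Real.log (P (u,y)/(a u * b y)))/Real.log 2 := by
            gcongr
            linarith
        _ = P (u,y) * Real.logb 2 (P (u,y)/(a u * b y)) := by rw [Real.logb]; ring
  have ha1 : ∑ u, a u = 1 := by
    rw [Fintype.sum_prod_type] at h1
    exact h1
  have hb1 : ∑ y, b y = 1 := by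
    rw [Fintype.sum_prod_type] at h1
    rw [← h1]
    exact Finset.sum_comm
  have h1' : ∑ u, ∑ y, P (u,y) = 1 := by
    rw [Fintype.sum_prod_type] at h1
    exact h1
  calc (0:ℝ) = (1 - (∑ u, a u) * (∑ y, b y)) / Real.log 2 := by
        rw [ha1, hb1]
        norm_num
    _ = ∑ u, ∑ y, (P (u,y) - a u * b y) / Real.log 2 := by
        rw [Fintype.sum_mul_sum, ← h1', ← Finset.sum_sub_distrib, Finset.sum_div]
        refine Finset.sum_congr rfl fun u _ => ?_
        rw [← Finset.sum_sub_distrib, Finset.sum_div]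
    _ ≤ mutInf P := by
        rw [mutInf]
        exact Finset.sum_le_sum fun u _ => Finset.sum_le_sum fun y _ => key u y

lemma mutInf_le {U Y : Type*} [Fintype U] [Fintype Y] (P : U × Y → ℝ)
    (h0 : ∀ p, 0 ≤ P p) (h1 : ∑ p, P p = 1) :
    mutInf P ≤ Real.logb 2 (Fintype.card Y) := by
  have hrow : ent (fun u => ∑ y, P (u,y)) ≤ ent P := by
    rw [ent, ent, Fintype.sum_prod_type]
    exact Finset.sum_le_sum fun u _ => eta_sum_le _ _ (fun y _ => h0 _)
  have hcol1 : ∑ y, ∑ u, P (u,y) = 1 := by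
    rw [Fintype.sum_prod_type] at h1
    rw [← h1]
    exact Finset.sum_comm
  have hcol := ent_le_logb_card (fun y => ∑ u, P (u,y))
    (fun y => Finset.sum_nonneg fun u _ => h0 _) hcol1
  rw [mutInf_eq P h0]
  linarith

def upEquiv (α β : Type*) : α × β ≃ ULift.{v'} α × β where
  toFun p := (ULift.up p.1, p.2)
  invFun p := (p.1.down, p.2)
  left_inv := by rintro ⟨a, b⟩; rfl
  right_inv := by rintro ⟨⟨a⟩, b⟩; rfl

def punitEquiv (β : Type*) : β ≃ PUnit.{v'+1} × β where
  toFun b := (PUnit.unit, b)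
  invFun p := p.2
  left_inv := by intro b; rfl
  right_inv := by rintro ⟨⟨⟩, b⟩; rfl

section jointAux
variable {X : Type u} {Y : Type v} [Fintype X] [Fintype Y]
  (W : X → Y → ℝ) (hW : IsChannel W) (n k : ℕ) (E : Fin (k+1) → (Fin n → X) → ℝ)
  (hE : ∀ u, (∀ xn, 0 ≤ E u xn) ∧ ∑ xn, E u xn = 1)
include hW hE

lemma jointOut_nonneg : ∀ p, 0 ≤ jointOut n W E p := by
  intro p
  refine Finset.sum_nonneg fun x _ => ?_
  refine mul_nonneg (mul_nonneg (Finset.prod_nonneg fun i _ => (hW (x i)).1 _) ((hE p.1).1 x)) ?_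
  positivity

lemma jointOut_row : ∀ u, ∑ g : Fin n → Y, jointOut n W E (u, g)
    = ((Fintype.card (Fin (k+1)) : ℝ))⁻¹ := by
  intro u
  set c : ℝ := ((Fintype.card (Fin (k+1)) : ℝ))⁻¹ with hc
  calc ∑ g : Fin n → Y, jointOut n W E (u,g)
      = ∑ x : Fin n → X, E u x * c * ∑ g : Fin n → Y, ∏ i, W (x i) (g i) := by
        simp only [jointOut]
        rw [Finset.sum_comm]
        refine Finset.sum_congr rfl fun x _ => ?_
        rw [Finset.mul_sum]
        exact Finset.sum_congr rfl fun g _ => by ring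
    _ = ∑ x, E u x * c := by
        refine Finset.sum_congr rfl fun x _ => ?_
        rw [sum_prod_one hW n x, mul_one]
    _ = c := by rw [← Finset.sum_mul, (hE u).2, one_mul]

lemma jointOut_sum_one : ∑ p, jointOut n W E p = 1 := by
  rw [Fintype.sum_prod_type]
  rw [Finset.sum_congr rfl fun u _ => jointOut_row W hW n k E hE u]
  rw [Finset.sum_const, Finset.card_univ, nsmul_eq_mul]
  rw [mul_inv_cancel₀]
  have : Fintype.card (Fin (k+1)) = k + 1 := Fintype.card_fin _
  rw [this]
  exact_mod_cast Nat.succ_ne_zero k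

lemma jointOut_ent : ent (jointOut n W E)
    = ent (outC n W (fun q : (ULift.{v} (Fin (k+1))) × (Fin n → X) =>
        E q.1.down q.2 * ((Fintype.card (Fin (k+1)) : ℝ))⁻¹)) := by
  have hfn : jointOut n W E = fun p : (Fin (k+1)) × (Fin n → Y) =>
      (outC n W (fun q : (ULift.{v} (Fin (k+1))) × (Fin n → X) =>
        E q.1.down q.2 * ((Fintype.card (Fin (k+1)) : ℝ))⁻¹)) (upEquiv _ _ p) := by
    funext p
    simp only [jointOut, outC, upEquiv, Equiv.coe_fn_mk]
    exact Finset.sum_congr rfl fun x _ => by ring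
  rw [hfn]
  exact ent_reindex (upEquiv _ _) _

lemma jointOut_col_ent : ent (fun g : Fin n → Y => ∑ u, jointOut n W E (u, g))
    = ent (outC n W (fun q : PUnit.{v+1} × (Fin n → X) =>
        (∑ u, E u q.2) * ((Fintype.card (Fin (k+1)) : ℝ))⁻¹)) := by
  have hfn : (fun g : Fin n → Y => ∑ u, jointOut n W E (u, g))
      = fun g => (outC n W (fun q : PUnit.{v+1} × (Fin n → X) =>
        (∑ u, E u q.2) * ((Fintype.card (Fin (k+1)) : ℝ))⁻¹)) (punitEquiv _ g) := by
    funext g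
    simp only [jointOut, outC, punitEquiv, Equiv.coe_fn_mk]
    rw [Finset.sum_comm]
    refine Finset.sum_congr rfl fun x _ => ?_
    rw [Finset.sum_mul, Finset.sum_mul]
    exact Finset.sum_congr rfl fun u _ => by ring
  rw [hfn]
  exact ent_reindex (punitEquiv _) _

end jointAux

lemma mi_bounds {X : Type u} {Y : Type v} [Fintype X] [Fintype Y]
    (W : X → Y → ℝ) (hW : IsChannel W) (n k : ℕ) (E : Fin (k+1) → (Fin n → X) → ℝ)
    (hE : ∀ u, (∀ xn, 0 ≤ E u xn) ∧ ∑ xn, E u xn = 1) :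
    0 ≤ mutInf (jointOut n W E) ∧
      mutInf (jointOut n W E) ≤ (n:ℝ) * Real.logb 2 (Fintype.card Y) := by
  classical
  have h0 := jointOut_nonneg W hW n k E hE
  have h1 := jointOut_sum_one W hW n k E hE
  refine ⟨mutInf_nonneg _ h0 h1, ?_⟩
  have h2 := mutInf_le _ h0 h1
  have hcard : (Fintype.card (Fin n → Y) : ℝ) = (Fintype.card Y : ℝ) ^ n := by
    rw [Fintype.card_fun, Fintype.card_fin]
    push_cast
    ring
  rwa [hcard, Real.logb_pow] at h2

lemma mi_diff {X : Type u} {Y : Type v} [Fintype X] [Fintype Y] {ε : ℝ}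
    (hε0 : 0 < ε) (hε1 : ε < 1) (W W' : X → Y → ℝ) (hW : IsChannel W) (hW' : IsChannel W')
    (hd : ∀ x, ∑ y, |W x y - W' x y| ≤ ε) (n k : ℕ) (E : Fin (k+1) → (Fin n → X) → ℝ)
    (hE : ∀ u, (∀ xn, 0 ≤ E u xn) ∧ ∑ xn, E u xn = 1) :
    |mutInf (jointOut n W E) - mutInf (jointOut n W' E)|
      ≤ 2 * (n : ℝ) * (ε * Real.logb 2 (Fintype.card Y) + H2 ε) := by
  classical
  set L := ε * Real.logb 2 (Fintype.card Y) + H2 ε with hL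
  set c : ℝ := ((Fintype.card (Fin (k+1)) : ℝ))⁻¹ with hc
  have hc0 : (0:ℝ) ≤ c := by positivity
  have hcne : (Fintype.card (Fin (k+1)) : ℝ) ≠ 0 := by
    rw [Fintype.card_fin]
    exact_mod_cast Nat.succ_ne_zero k
  -- entropy of joints
  have hentJ : |ent (jointOut n W E) - ent (jointOut n W' E)| ≤ (n:ℝ) * L := by
    rw [jointOut_ent W hW n k E hE, jointOut_ent W' hW' n k E hE]
    refine core hε0 hε1 W W' hW hW' hd n (ULift.{v} (Fin (k+1))) inferInstance _ ?_ ?_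
    · intro p
      exact mul_nonneg ((hE p.1.down).1 p.2) hc0
    · rw [Fintype.sum_prod_type]
      have key : ∀ uu : ULift.{v} (Fin (k+1)), ∑ x : Fin n → X, E uu.down x * c = c := by
        intro uu
        rw [← Finset.sum_mul, (hE uu.down).2, one_mul]
      rw [Finset.sum_congr rfl fun uu _ => key uu, Finset.sum_const, Finset.card_univ,
        nsmul_eq_mul]
      have : Fintype.card (ULift.{v} (Fin (k+1))) = Fintype.card (Fin (k+1)) := by
        simp
      rw [this, hc, mul_inv_cancel₀ hcne]
  -- entropy of column marginals
  have hentC : |ent (fun g : Fin n → Y => ∑ u, jointOut n W E (u,g))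
      - ent (fun g : Fin n → Y => ∑ u, jointOut n W' E (u,g))| ≤ (n:ℝ) * L := by
    rw [jointOut_col_ent W hW n k E hE, jointOut_col_ent W' hW' n k E hE]
    refine core hε0 hε1 W W' hW hW' hd n (PUnit.{v+1}) inferInstance _ ?_ ?_
    · intro p
      exact mul_nonneg (Finset.sum_nonneg fun u _ => (hE u).1 p.2) hc0
    · rw [Fintype.sum_prod_type]
      have key : ∑ x : Fin n → X, (∑ u, E u x) * c = 1 := by
        rw [← Finset.sum_mul, Finset.sum_comm]
        rw [Finset.sum_congr rfl fun u (_ : u ∈ Finset.univ) => (hE u).2]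
        rw [Finset.sum_const, Finset.card_univ, nsmul_eq_mul, mul_one, hc,
          mul_inv_cancel₀ hcne]
      simp only [key]
      simp
      simpa [hc] using key
  -- row marginals agree
  have hroweq : ent (fun u : Fin (k+1) => ∑ g : Fin n → Y, jointOut n W E (u,g))
      = ent (fun u : Fin (k+1) => ∑ g : Fin n → Y, jointOut n W' E (u,g)) := by
    congr 1
    funext u
    rw [jointOut_row W hW n k E hE u, jointOut_row W' hW' n k E hE u]
  rw [mutInf_eq _ (jointOut_nonneg W hW n k E hE),
    mutInf_eq _ (jointOut_nonneg W' hW' n k E hE), hroweq]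
  set R := ent (fun u : Fin (k+1) => ∑ g : Fin n → Y, jointOut n W' E (u,g))
  set B := ent (fun g : Fin n → Y => ∑ u, jointOut n W E (u,g))
  set B' := ent (fun g : Fin n → Y => ∑ u, jointOut n W' E (u,g))
  set C := ent (jointOut n W E)
  set C' := ent (jointOut n W' E)
  calc |(R + B - C) - (R + B' - C')| = |(B - B') - (C - C')| := by ring_nf
    _ ≤ |B - B'| + |C - C'| := abs_sub _ _
    _ ≤ (n:ℝ) * L + (n:ℝ) * L := add_le_add hentC hentJ
    _ = 2 * (n:ℝ) * L := by ring

/-- The set appearing in `secF`. -/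
def secSet {X Y Z : Type*} [Fintype X] [Fintype Y] [Fintype Z] {S : Type*}
    (W : S → X → Y → ℝ) (V : S → X → Z → ℝ) (n : ℕ) : Set ℝ :=
  {r : ℝ | ∃ (k : ℕ) (E : Fin (k + 1) → (Fin n → X) → ℝ),
    (∀ u, (∀ xn, 0 ≤ E u xn) ∧ ∑ xn : Fin n → X, E u xn = 1) ∧
    r = (⨅ s : S, mutInf (jointOut n (W s) E)) - ⨆ s : S, mutInf (jointOut n (V s) E)}

lemma secF_eq {X Y Z : Type*} [Fintype X] [Fintype Y] [Fintype Z] {S : Type*}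
    (W : S → X → Y → ℝ) (V : S → X → Z → ℝ) (n : ℕ) :
    secF W V n = (1 / (n : ℝ)) * sSup (secSet W V n) := rfl

lemma sset_nonempty {X Y Z : Type*} [Fintype X] [Fintype Y] [Fintype Z] {S : Type*}
    [Nonempty X] (W : S → X → Y → ℝ) (V : S → X → Z → ℝ) (n : ℕ) :
    (secSet W V n).Nonempty := by
  classical
  refine ⟨_, 0, fun _ _ => ((Fintype.card (Fin n → X) : ℝ))⁻¹, fun u => ⟨fun xn => by positivity, ?_⟩, rfl⟩
  rw [Finset.sum_const, Finset.card_univ, nsmul_eq_mul, mul_inv_cancel₀]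
  exact_mod_cast Fintype.card_ne_zero

lemma sset_bddAbove {X Y Z : Type*} [Fintype X] [Fintype Y] [Fintype Z] {S : Type*}
    [Nonempty S] (W : S → X → Y → ℝ) (V : S → X → Z → ℝ)
    (hW : ∀ s, IsChannel (W s)) (hV : ∀ s, IsChannel (V s)) (n : ℕ) :
    ∀ r ∈ secSet W V n, r ≤ (n:ℝ) * Real.logb 2 (Fintype.card Y) := by
  rintro r ⟨k, E, hE, rfl⟩
  obtain ⟨s₀⟩ := ‹Nonempty S›
  have hb : BddBelow (Set.range fun s => mutInf (jointOut n (W s) E)) := by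
    refine ⟨0, ?_⟩
    rintro x ⟨s, rfl⟩
    exact (mi_bounds (W s) (hW s) n k E hE).1
  have h1 : (⨅ s, mutInf (jointOut n (W s) E)) ≤ (n:ℝ) * Real.logb 2 (Fintype.card Y) :=
    le_trans (ciInf_le hb s₀) (mi_bounds (W s₀) (hW s₀) n k E hE).2
  have hba : BddAbove (Set.range fun s => mutInf (jointOut n (V s) E)) := by
    refine ⟨(n:ℝ) * Real.logb 2 (Fintype.card Z), ?_⟩
    rintro x ⟨s, rfl⟩
    exact (mi_bounds (V s) (hV s) n k E hE).2
  have h2 : (0:ℝ) ≤ ⨆ s, mutInf (jointOut n (V s) E) :=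
    le_trans (mi_bounds (V s₀) (hV s₀) n k E hE).1 (le_ciSup hba s₀)
  linarith

lemma secF_mono {X : Type u} {Y : Type v} {Z : Type z} [Fintype X] [Fintype Y] [Fintype Z]
    {S₁ S₂ : Type*} [Nonempty S₁] [Nonempty S₂] [Nonempty X] {ε : ℝ}
    (hε0 : 0 < ε) (hε1 : ε < 1)
    (W₁ : S₁ → X → Y → ℝ) (V₁ : S₁ → X → Z → ℝ)
    (W₂ : S₂ → X → Y → ℝ) (V₂ : S₂ → X → Z → ℝ)
    (hW₁ : ∀ s, IsChannel (W₁ s)) (hV₁ : ∀ s, IsChannel (V₁ s))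
    (hW₂ : ∀ s, IsChannel (W₂ s)) (hV₂ : ∀ s, IsChannel (V₂ s))
    (hw : ∀ s₁ : S₁, ∃ s₂ : S₂, ∀ x, ∑ y, |W₁ s₁ x y - W₂ s₂ x y| ≤ ε)
    (hv : ∀ s₁ : S₁, ∃ s₂ : S₂, ∀ x, ∑ zz, |V₁ s₁ x zz - V₂ s₂ x zz| ≤ ε)
    (n : ℕ) (hn : 0 < n) :
    secF W₂ V₂ n ≤ secF W₁ V₁ n
      + (2*ε*Real.logb 2 (Fintype.card Y) + 2*ε*Real.logb 2 (Fintype.card Z) + 4 * H2 ε) := by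
  classical
  set LY : ℝ := ε * Real.logb 2 (Fintype.card Y) + H2 ε with hLY
  set LZ : ℝ := ε * Real.logb 2 (Fintype.card Z) + H2 ε with hLZ
  set D : ℝ := 2*(n:ℝ)*LY + 2*(n:ℝ)*LZ with hD
  have key : ∀ r₂ ∈ secSet W₂ V₂ n, ∃ r₁ ∈ secSet W₁ V₁ n, r₂ ≤ r₁ + D := by
    rintro r₂ ⟨k, E, hE, rfl⟩
    refine ⟨_, ⟨k, E, hE, rfl⟩, ?_⟩
    have hbb₂ : BddBelow (Set.range fun s => mutInf (jointOut n (W₂ s) E)) := by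
      refine ⟨0, ?_⟩; rintro x ⟨s, rfl⟩; exact (mi_bounds (W₂ s) (hW₂ s) n k E hE).1
    have hba₂ : BddAbove (Set.range fun s => mutInf (jointOut n (V₂ s) E)) := by
      refine ⟨(n:ℝ) * Real.logb 2 (Fintype.card Z), ?_⟩
      rintro x ⟨s, rfl⟩; exact (mi_bounds (V₂ s) (hV₂ s) n k E hE).2
    have hinf : (⨅ s₂, mutInf (jointOut n (W₂ s₂) E))
        ≤ (⨅ s₁, mutInf (jointOut n (W₁ s₁) E)) + 2*(n:ℝ)*LY := by
      rw [← sub_le_iff_le_add]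
      refine le_ciInf fun s₁ => ?_
      obtain ⟨s₂, hs₂⟩ := hw s₁
      have hmd := mi_diff hε0 hε1 (W₁ s₁) (W₂ s₂) (hW₁ s₁) (hW₂ s₂) hs₂ n k E hE
      have : mutInf (jointOut n (W₂ s₂) E) ≤ mutInf (jointOut n (W₁ s₁) E) + 2*(n:ℝ)*LY := by
        have h9 := abs_le.mp hmd
        rw [hLY]
        linarith [h9.1]
      have h3 : (⨅ s₂', mutInf (jointOut n (W₂ s₂') E)) ≤ mutInf (jointOut n (W₂ s₂) E) :=
        ciInf_le hbb₂ s₂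
      linarith
    have hsup : (⨆ s₁, mutInf (jointOut n (V₁ s₁) E))
        ≤ (⨆ s₂, mutInf (jointOut n (V₂ s₂) E)) + 2*(n:ℝ)*LZ := by
      refine ciSup_le fun s₁ => ?_
      obtain ⟨s₂, hs₂⟩ := hv s₁
      have hmd := mi_diff hε0 hε1 (V₁ s₁) (V₂ s₂) (hV₁ s₁) (hV₂ s₂) hs₂ n k E hE
      have h4 : mutInf (jointOut n (V₂ s₂) E) ≤ ⨆ s₂', mutInf (jointOut n (V₂ s₂') E) :=
        le_ciSup hba₂ s₂
      have h9 := abs_le.mp hmd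
      rw [hLZ]
      linarith [h9.2]
    rw [hD]
    linarith
  have hsup : sSup (secSet W₂ V₂ n) ≤ sSup (secSet W₁ V₁ n) + D := by
    refine csSup_le (sset_nonempty W₂ V₂ n) fun r₂ hr₂ => ?_
    obtain ⟨r₁, hr₁, hle⟩ := key r₂ hr₂
    have : r₁ ≤ sSup (secSet W₁ V₁ n) :=
      le_csSup ⟨(n:ℝ) * Real.logb 2 (Fintype.card Y), fun r hr =>
        sset_bddAbove W₁ V₁ hW₁ hV₁ n r hr⟩ hr₁
    linarith
  rw [secF_eq, secF_eq]
  have hn0 : (0:ℝ) < (n:ℝ) := by exact_mod_cast hn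
  have h5 : (1/(n:ℝ)) * sSup (secSet W₂ V₂ n) ≤ (1/(n:ℝ)) * (sSup (secSet W₁ V₁ n) + D) := by
    apply mul_le_mul_of_nonneg_left hsup
    positivity
  calc (1/(n:ℝ)) * sSup (secSet W₂ V₂ n) ≤ (1/(n:ℝ)) * (sSup (secSet W₁ V₁ n) + D) := h5
    _ = (1/(n:ℝ)) * sSup (secSet W₁ V₁ n) + (1/(n:ℝ)) * D := by ring
    _ = (1/(n:ℝ)) * sSup (secSet W₁ V₁ n)
        + (2*ε*Real.logb 2 (Fintype.card Y) + 2*ε*Real.logb 2 (Fintype.card Z) + 4 * H2 ε) := by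
        congr 1
        rw [hD, hLY, hLZ]
        field_simp
        ring

lemma dChan_comm {X Y : Type*} [Fintype Y] (W W' : X → Y → ℝ) : dChan W W' = dChan W' W := by
  unfold dChan
  congr 1
  funext x
  exact Finset.sum_congr rfl fun y _ => abs_sub_comm _ _

lemma dChan_nonneg {X Y : Type*} [Fintype Y] (W W' : X → Y → ℝ) : 0 ≤ dChan W W' :=
  Real.iSup_nonneg fun x => Finset.sum_nonneg fun y _ => abs_nonneg _

lemma dChan_le_two {X Y : Type*} [Fintype Y] {W W' : X → Y → ℝ}
    (hW : IsChannel W) (hW' : IsChannel W') : dChan W W' ≤ 2 := by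
  refine Real.iSup_le (fun x => ?_) (by norm_num)
  calc ∑ y, |W x y - W' x y| ≤ ∑ y, (W x y + W' x y) := by
        refine Finset.sum_le_sum fun y _ => ?_
        calc |W x y - W' x y| ≤ |W x y| + |W' x y| := abs_sub _ _
          _ = W x y + W' x y := by
              rw [abs_of_nonneg ((hW x).1 y), abs_of_nonneg ((hW' x).1 y)]
    _ = 2 := by rw [Finset.sum_add_distrib, (hW x).2, (hW' x).2]; norm_num

lemma close_of_lt {X Y : Type*} [Fintype Y] [Nonempty X] {S₁ S₂ : Type*}
    [Nonempty S₁] [Nonempty S₂] {ε : ℝ}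
    (W₁ : S₁ → X → Y → ℝ) (W₂ : S₂ → X → Y → ℝ)
    (hW₁ : ∀ s, IsChannel (W₁ s)) (hW₂ : ∀ s, IsChannel (W₂ s))
    (h : (⨆ s₁ : S₁, ⨅ s₂ : S₂, dChan (W₁ s₁) (W₂ s₂)) < ε) :
    ∀ s₁, ∃ s₂, ∀ x, ∑ y, |W₁ s₁ x y - W₂ s₂ x y| ≤ ε := by
  intro s₁
  have hbdd : BddAbove (Set.range fun s₁ : S₁ => ⨅ s₂ : S₂, dChan (W₁ s₁) (W₂ s₂)) := by
    refine ⟨2, ?_⟩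
    rintro r ⟨s, rfl⟩
    obtain ⟨s₂⟩ := ‹Nonempty S₂›
    refine le_trans (ciInf_le ⟨0, ?_⟩ s₂) (dChan_le_two (hW₁ s) (hW₂ s₂))
    rintro r' ⟨s', rfl⟩
    exact dChan_nonneg _ _
  have h1 : (⨅ s₂ : S₂, dChan (W₁ s₁) (W₂ s₂)) < ε := lt_of_le_of_lt (le_ciSup hbdd s₁) h
  obtain ⟨s₂, hs₂⟩ := exists_lt_of_ciInf_lt h1
  refine ⟨s₂, fun x => ?_⟩
  have hbdd2 : BddAbove (Set.range fun x : X => ∑ y, |W₁ s₁ x y - W₂ s₂ x y|) := by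
    refine ⟨2, ?_⟩
    rintro r ⟨x', rfl⟩
    calc ∑ y, |W₁ s₁ x' y - W₂ s₂ x' y| ≤ ∑ y, (W₁ s₁ x' y + W₂ s₂ x' y) := by
          refine Finset.sum_le_sum fun y _ => ?_
          calc |W₁ s₁ x' y - W₂ s₂ x' y| ≤ |W₁ s₁ x' y| + |W₂ s₂ x' y| := abs_sub _ _
            _ = W₁ s₁ x' y + W₂ s₂ x' y := by
                rw [abs_of_nonneg ((hW₁ s₁ x').1 y), abs_of_nonneg ((hW₂ s₂ x').1 y)]
      _ = 2 := by rw [Finset.sum_add_distrib, (hW₁ s₁ x').2, (hW₂ s₂ x').2]; norm_num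
  have : ∑ y, |W₁ s₁ x y - W₂ s₂ x y| ≤ dChan (W₁ s₁) (W₂ s₂) := le_ciSup hbdd2 x
  have := hs₂
  unfold dChan at *
  linarith


/-- continuity of the compound wiretap secrecy capacity in the uncertainty set. -/
theorem compound_secrecy_capacity_continuity {X Y Z : Type*}
    [Fintype X] [Fintype Y] [Fintype Z] {S₁ S₂ : Type*} [Nonempty S₁] [Nonempty S₂]
    {ε : ℝ} (hε : ε ∈ Set.Ioo (0 : ℝ) 1)
    (W₁ : S₁ → X → Y → ℝ) (V₁ : S₁ → X → Z → ℝ)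
    (W₂ : S₂ → X → Y → ℝ) (V₂ : S₂ → X → Z → ℝ)
    (hW₁ : ∀ s, IsChannel (W₁ s)) (hV₁ : ∀ s, IsChannel (V₁ s))
    (hW₂ : ∀ s, IsChannel (W₂ s)) (hV₂ : ∀ s, IsChannel (V₂ s))
    (hD : Dcwc W₁ V₁ W₂ V₂ < ε) :
    (∀ n : ℕ, 0 < n →
      |secF W₁ V₁ n - secF W₂ V₂ n| ≤
        4 * ε * Real.logb 2 ((Fintype.card Y : ℝ) * (Fintype.card Z : ℝ)) + 8 * H2 ε) ∧
    (∀ C₁ C₂ : ℝ,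
      Filter.Tendsto (fun n : ℕ => secF W₁ V₁ n) Filter.atTop (nhds C₁) →
      Filter.Tendsto (fun n : ℕ => secF W₂ V₂ n) Filter.atTop (nhds C₂) →
      |C₁ - C₂| ≤
        4 * ε * Real.logb 2 ((Fintype.card Y : ℝ) * (Fintype.card Z : ℝ)) + 8 * H2 ε) := by
  obtain ⟨hε0, hε1⟩ := hε
  have hH2 : 0 ≤ H2 ε := by
    rw [H2_eq]
    have h1 := eta_nonneg hε0.le hε1.le
    have h2 := eta_nonneg (by linarith : (0:ℝ) ≤ 1 - ε) (by linarith)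
    linarith
  have part1 : ∀ n : ℕ, 0 < n →
      |secF W₁ V₁ n - secF W₂ V₂ n| ≤
        4 * ε * Real.logb 2 ((Fintype.card Y : ℝ) * (Fintype.card Z : ℝ)) + 8 * H2 ε := by
    intro n hn
    by_cases hX : Nonempty X
    · haveI := hX
      haveI hNY : Nonempty Y := by
        by_contra hY
        haveI := not_nonempty_iff.mp hY
        obtain ⟨s⟩ := ‹Nonempty S₁›
        obtain ⟨x⟩ := hX
        have h1 := (hW₁ s x).2
        rw [Finset.univ_eq_empty, Finset.sum_empty] at h1
        norm_num at h1
      haveI hNZ : Nonempty Z := by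
        by_contra hZ
        haveI := not_nonempty_iff.mp hZ
        obtain ⟨s⟩ := ‹Nonempty S₁›
        obtain ⟨x⟩ := hX
        have h1 := (hV₁ s x).2
        rw [Finset.univ_eq_empty, Finset.sum_empty] at h1
        norm_num at h1
      -- four closeness extractions
      have hDW21 : (⨆ s₂ : S₂, ⨅ s₁ : S₁, dChan (W₁ s₁) (W₂ s₂)) < ε :=
        lt_of_le_of_lt (le_trans (le_max_left _ _) (le_max_left _ _)) hD
      have hDW12 : (⨆ s₁ : S₁, ⨅ s₂ : S₂, dChan (W₁ s₁) (W₂ s₂)) < ε :=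
        lt_of_le_of_lt (le_trans (le_max_right _ _) (le_max_left _ _)) hD
      have hDV21 : (⨆ s₂ : S₂, ⨅ s₁ : S₁, dChan (V₁ s₁) (V₂ s₂)) < ε :=
        lt_of_le_of_lt (le_trans (le_max_left _ _) (le_max_right _ _)) hD
      have hDV12 : (⨆ s₁ : S₁, ⨅ s₂ : S₂, dChan (V₁ s₁) (V₂ s₂)) < ε :=
        lt_of_le_of_lt (le_trans (le_max_right _ _) (le_max_right _ _)) hD
      have hw12 := close_of_lt W₁ W₂ hW₁ hW₂ hDW12
      have hv12 := close_of_lt V₁ V₂ hV₁ hV₂ hDV12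
      have hw21 : ∀ s₂ : S₂, ∃ s₁ : S₁, ∀ x, ∑ y, |W₂ s₂ x y - W₁ s₁ x y| ≤ ε := by
        apply close_of_lt W₂ W₁ hW₂ hW₁
        have : (⨆ s₂ : S₂, ⨅ s₁ : S₁, dChan (W₂ s₂) (W₁ s₁))
            = ⨆ s₂ : S₂, ⨅ s₁ : S₁, dChan (W₁ s₁) (W₂ s₂) := by
          congr 1
          funext s₂
          congr 1
          funext s₁
          exact dChan_comm _ _
        rw [this]
        exact hDW21
      have hv21 : ∀ s₂ : S₂, ∃ s₁ : S₁, ∀ x, ∑ zz, |V₂ s₂ x zz - V₁ s₁ x zz| ≤ ε := by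
        apply close_of_lt V₂ V₁ hV₂ hV₁
        have : (⨆ s₂ : S₂, ⨅ s₁ : S₁, dChan (V₂ s₂) (V₁ s₁))
            = ⨆ s₂ : S₂, ⨅ s₁ : S₁, dChan (V₁ s₁) (V₂ s₂) := by
          congr 1
          funext s₂
          congr 1
          funext s₁
          exact dChan_comm _ _
        rw [this]
        exact hDV21
      have h12 := secF_mono hε0 hε1 W₁ V₁ W₂ V₂ hW₁ hV₁ hW₂ hV₂ hw12 hv12 n hn
      have h21 := secF_mono hε0 hε1 W₂ V₂ W₁ V₁ hW₂ hV₂ hW₁ hV₁ hw21 hv21 n hn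
      have hYc : (1:ℝ) ≤ (Fintype.card Y : ℝ) := by
        exact_mod_cast Fintype.card_pos
      have hZc : (1:ℝ) ≤ (Fintype.card Z : ℝ) := by
        exact_mod_cast Fintype.card_pos
      have hlY : 0 ≤ Real.logb 2 (Fintype.card Y : ℝ) :=
        Real.logb_nonneg one_lt_two hYc
      have hlZ : 0 ≤ Real.logb 2 (Fintype.card Z : ℝ) :=
        Real.logb_nonneg one_lt_two hZc
      have hsplit : Real.logb 2 ((Fintype.card Y : ℝ) * (Fintype.card Z : ℝ))
          = Real.logb 2 (Fintype.card Y : ℝ) + Real.logb 2 (Fintype.card Z : ℝ) :=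
        Real.logb_mul (by linarith) (by linarith)
      rw [abs_sub_le_iff]
      constructor
      · rw [hsplit]
        nlinarith [h21, hε0.le]
      · rw [hsplit]
        nlinarith [h12, hε0.le]
    · haveI hXE : IsEmpty X := not_nonempty_iff.mp hX
      haveI : IsEmpty (Fin n → X) := ⟨fun f => IsEmpty.false (f ⟨0, hn⟩)⟩
      have hempty1 : secSet W₁ V₁ n = ∅ := by
        ext r
        simp only [secSet, Set.mem_setOf_eq, Set.mem_empty_iff_false, iff_false]
        rintro ⟨k, E, hE, -⟩
        have h1 := (hE 0).2
        rw [Finset.univ_eq_empty, Finset.sum_empty] at h1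
        norm_num at h1
      have hempty2 : secSet W₂ V₂ n = ∅ := by
        ext r
        simp only [secSet, Set.mem_setOf_eq, Set.mem_empty_iff_false, iff_false]
        rintro ⟨k, E, hE, -⟩
        have h1 := (hE 0).2
        rw [Finset.univ_eq_empty, Finset.sum_empty] at h1
        norm_num at h1
      have e1 : secF W₁ V₁ n = 0 := by
        rw [secF_eq, hempty1, Real.sSup_empty, mul_zero]
      have e2 : secF W₂ V₂ n = 0 := by
        rw [secF_eq, hempty2, Real.sSup_empty, mul_zero]
      rw [e1, e2, sub_zero, abs_zero]
      have hterm : 0 ≤ 4 * ε * Real.logb 2 ((Fintype.card Y : ℝ) * (Fintype.card Z : ℝ)) := by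
        rcases Nat.eq_zero_or_pos (Fintype.card Y * Fintype.card Z) with h0 | h0
        · have : (Fintype.card Y : ℝ) * (Fintype.card Z : ℝ) = 0 := by exact_mod_cast h0
          rw [this, Real.logb_zero, mul_zero]
        · have h1 : (1:ℝ) ≤ (Fintype.card Y : ℝ) * (Fintype.card Z : ℝ) := by
            exact_mod_cast h0
          have := Real.logb_nonneg one_lt_two h1
          positivity
      linarith
  refine ⟨part1, fun C₁ C₂ h₁ h₂ => ?_⟩
  have habs : Filter.Tendsto (fun n : ℕ => |secF W₁ V₁ n - secF W₂ V₂ n|)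
      Filter.atTop (nhds |C₁ - C₂|) := (h₁.sub h₂).abs
  exact le_of_tendsto habs (Filter.eventually_atTop.mpr ⟨1, fun n hn => part1 n hn⟩)
end

section
/- Let W₁ = {W(·|·,s₁)}_{s₁∈S₁} be an AVC with finite alphabets X, Y and finite state set S₁ such that min_{σ,σ'} F(σ,σ',W₁) = δ > 0. Then there exists ε > 0 such that every AVC W₂ = {Ŵ(·|·,s₂)}_{s₂∈S₂} over the same alphabets with finite state set S₂ and D(W₁,W₂) < ε satisfies min_{σ,σ'} F(σ,σ',W₂) ≥ δ/2; in particular, every such AVC W₂ is non-symmetrizable. -/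
open Real Finset

/-- An AVC `W = {W(·|·,s)}_{s∈S}` is symmetrizable: there is a stochastic matrix
`σ : X → P(S)` with `∑_s W(y|x₁,s)σ(s|x₂) = ∑_s W(y|x₂,s)σ(s|x₁)` for all `x₁,x₂,y`. -/
def Symmetrizable {X Y S : Type*} [Fintype Y] [Fintype S] (W : S → X → Y → ℝ) : Prop :=
  ∃ σ : X → S → ℝ, IsChannel σ ∧
    ∀ x₁ x₂ y, (∑ s : S, W s x₁ y * σ x₂ s) = ∑ s : S, W s x₂ y * σ x₁ s

/-- Distance `D(W₁,W₂)` between two AVCs (families of channels). -/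
noncomputable def Davc {X Y : Type*} [Fintype Y] {S₁ S₂ : Type*}
    (W₁ : S₁ → X → Y → ℝ) (W₂ : S₂ → X → Y → ℝ) : ℝ :=
  max (⨆ s₂ : S₂, ⨅ s₁ : S₁, dChan (W₁ s₁) (W₂ s₂))
      (⨆ s₁ : S₁, ⨅ s₂ : S₂, dChan (W₁ s₁) (W₂ s₂))

/-- The symmetrizability gap function
`F(σ,σ',W) = ∑_{x₁,x₂,y} |∑_s W(y|x₁,s)σ(s|x₂) − ∑_s W(y|x₂,s)σ'(s|x₁)|`. -/
noncomputable def Fsym {X Y S : Type*} [Fintype X] [Fintype Y] [Fintype S]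
    (σ σ' : X → S → ℝ) (W : S → X → Y → ℝ) : ℝ :=
  ∑ x₁ : X, ∑ x₂ : X, ∑ y : Y,
    |(∑ s : S, W s x₁ y * σ x₂ s) - ∑ s : S, W s x₂ y * σ' x₁ s|

lemma Fsym_nonneg {X Y S : Type*} [Fintype X] [Fintype Y] [Fintype S]
    (σ σ' : X → S → ℝ) (W : S → X → Y → ℝ) : 0 ≤ Fsym σ σ' W := by
  unfold Fsym
  refine Finset.sum_nonneg fun _ _ => Finset.sum_nonneg fun _ _ =>
    Finset.sum_nonneg fun _ _ => abs_nonneg _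

/-- if `min_{σ,σ'} F(σ,σ',W₁) = δ > 0`, then all AVCs in a sufficiently small
`D`-neighborhood of `W₁` have `min_{σ,σ'} F ≥ δ/2`, hence are non-symmetrizable. -/
theorem Fsym_min_stability {X Y S₁ : Type*}
    [Fintype X] [Fintype Y] [Fintype S₁] [Nonempty X] [Nonempty S₁]
    (W₁ : S₁ → X → Y → ℝ) (hW₁ : ∀ s, IsChannel (W₁ s))
    (δ : ℝ) (hδ : 0 < δ)
    (hmin : sInf {r : ℝ | ∃ σ σ' : X → S₁ → ℝ,
        IsChannel σ ∧ IsChannel σ' ∧ r = Fsym σ σ' W₁} = δ) :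
    ∃ ε > 0, ∀ (S₂ : Type*) [Fintype S₂] [Nonempty S₂] (W₂ : S₂ → X → Y → ℝ),
      (∀ s, IsChannel (W₂ s)) → Davc W₁ W₂ < ε →
      δ / 2 ≤ sInf {r : ℝ | ∃ σ σ' : X → S₂ → ℝ,
          IsChannel σ ∧ IsChannel σ' ∧ r = Fsym σ σ' W₂} ∧
        ¬ Symmetrizable W₂ := by
  classical
  have hnpos : (0:ℝ) < (Fintype.card X : ℝ) := by
    exact_mod_cast Fintype.card_pos
  set n : ℝ := (Fintype.card X : ℝ) with hn
  set ε : ℝ := δ / (4 * n ^ 2) with hε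
  have hεpos : 0 < ε := by
    apply div_pos hδ; positivity
  refine ⟨ε, hεpos, ?_⟩
  intro S₂ _ _ W₂ hW₂ hD
  -- choose, for each s₂, a closest s₁
  have hsup : (⨆ s₂ : S₂, ⨅ s₁ : S₁, dChan (W₁ s₁) (W₂ s₂)) < ε :=
    lt_of_le_of_lt (le_max_left _ _) hD
  have hfex : ∀ s₂ : S₂, ∃ s₁ : S₁, ∀ x, ∑ y, |W₁ s₁ x y - W₂ s₂ x y| ≤ ε := by
    intro s₂
    obtain ⟨s₁, hs₁⟩ := Finite.exists_min (fun s₁ => dChan (W₁ s₁) (W₂ s₂))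
    refine ⟨s₁, fun x => ?_⟩
    have h1 : dChan (W₁ s₁) (W₂ s₂) ≤ ⨅ s₁', dChan (W₁ s₁') (W₂ s₂) := le_ciInf hs₁
    have h2 : (⨅ s₁', dChan (W₁ s₁') (W₂ s₂)) ≤ ⨆ s₂' : S₂, ⨅ s₁', dChan (W₁ s₁') (W₂ s₂') :=
      le_ciSup (Set.Finite.bddAbove (Set.finite_range
        (fun s₂' : S₂ => ⨅ s₁', dChan (W₁ s₁') (W₂ s₂')))) s₂
    have h3 : ∑ y, |W₁ s₁ x y - W₂ s₂ x y| ≤ dChan (W₁ s₁) (W₂ s₂) :=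
      le_ciSup (Set.Finite.bddAbove (Set.finite_range
        (fun x : X => ∑ y, |W₁ s₁ x y - W₂ s₂ x y|))) x
    linarith [lt_of_le_of_lt ((h3.trans h1).trans h2) hsup]
  choose f hf using hfex
  -- the key lower bound on Fsym for W₂
  have key : ∀ σ σ' : X → S₂ → ℝ, IsChannel σ → IsChannel σ' →
      δ / 2 ≤ Fsym σ σ' W₂ := by
    intro σ σ' hσ hσ'
    -- pushforward channels
    set τ : X → S₁ → ℝ := fun x s₁ => ∑ s₂ ∈ univ.filter (fun s₂ => f s₂ = s₁), σ x s₂ with hτ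
    set τ' : X → S₁ → ℝ := fun x s₁ => ∑ s₂ ∈ univ.filter (fun s₂ => f s₂ = s₁), σ' x s₂ with hτ'
    have hchan : ∀ (ρ : X → S₂ → ℝ), IsChannel ρ →
        IsChannel (fun x s₁ => ∑ s₂ ∈ univ.filter (fun s₂ => f s₂ = s₁), ρ x s₂) := by
      intro ρ hρ x
      constructor
      · intro s₁; exact Finset.sum_nonneg fun s₂ _ => (hρ x).1 s₂
      · rw [Finset.sum_fiberwise univ f (fun s₂ => ρ x s₂)]
        exact (hρ x).2
    have hτc : IsChannel τ := hchan σ hσ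
    have hτ'c : IsChannel τ' := hchan σ' hσ'
    -- rewrite pushed sums
    have hrw : ∀ (ρ : X → S₂ → ℝ) (x x' : X) (y : Y),
        (∑ s₁ : S₁, W₁ s₁ x y * ∑ s₂ ∈ univ.filter (fun s₂ => f s₂ = s₁), ρ x' s₂)
          = ∑ s₂ : S₂, W₁ (f s₂) x y * ρ x' s₂ := by
      intro ρ x x' y
      rw [← Finset.sum_fiberwise univ f (fun s₂ => W₁ (f s₂) x y * ρ x' s₂)]
      refine Finset.sum_congr rfl fun s₁ _ => ?_
      rw [Finset.mul_sum]
      refine Finset.sum_congr rfl fun s₂ hs₂ => ?_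
      rw [(Finset.mem_filter.mp hs₂).2]
    -- per-pair error estimate
    have herr : ∀ (ρ : X → S₂ → ℝ), IsChannel ρ → ∀ x x' : X,
        ∑ y, |(∑ s₂ : S₂, W₁ (f s₂) x y * ρ x' s₂) - ∑ s₂ : S₂, W₂ s₂ x y * ρ x' s₂| ≤ ε := by
      intro ρ hρ x x'
      have h1 : ∀ y, |(∑ s₂ : S₂, W₁ (f s₂) x y * ρ x' s₂) - ∑ s₂ : S₂, W₂ s₂ x y * ρ x' s₂|
          ≤ ∑ s₂ : S₂, |W₁ (f s₂) x y - W₂ s₂ x y| * ρ x' s₂ := by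
        intro y
        rw [← Finset.sum_sub_distrib]
        refine (Finset.abs_sum_le_sum_abs _ _).trans ?_
        refine Finset.sum_le_sum fun s₂ _ => ?_
        rw [← sub_mul, abs_mul, abs_of_nonneg ((hρ x').1 s₂)]
      calc ∑ y, |(∑ s₂ : S₂, W₁ (f s₂) x y * ρ x' s₂) - ∑ s₂ : S₂, W₂ s₂ x y * ρ x' s₂|
          ≤ ∑ y, ∑ s₂ : S₂, |W₁ (f s₂) x y - W₂ s₂ x y| * ρ x' s₂ :=
            Finset.sum_le_sum fun y _ => h1 y
        _ = ∑ s₂ : S₂, (∑ y, |W₁ (f s₂) x y - W₂ s₂ x y|) * ρ x' s₂ := by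
            rw [Finset.sum_comm]
            exact Finset.sum_congr rfl fun s₂ _ => (Finset.sum_mul _ _ _).symm
        _ ≤ ∑ s₂ : S₂, ε * ρ x' s₂ := by
            refine Finset.sum_le_sum fun s₂ _ => ?_
            exact mul_le_mul_of_nonneg_right (hf s₂ x) ((hρ x').1 s₂)
        _ = ε := by rw [← Finset.mul_sum, (hρ x').2, mul_one]
    -- Fsym τ τ' W₁ ≤ Fsym σ σ' W₂ + 2 n² ε
    have hbound : Fsym τ τ' W₁ ≤ Fsym σ σ' W₂ + 2 * n ^ 2 * ε := by
      have hpair : ∀ x₁ x₂ : X,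
          (∑ y, |(∑ s : S₁, W₁ s x₁ y * τ x₂ s) - ∑ s : S₁, W₁ s x₂ y * τ' x₁ s|)
            ≤ (∑ y, |(∑ s : S₂, W₂ s x₁ y * σ x₂ s) - ∑ s : S₂, W₂ s x₂ y * σ' x₁ s|)
              + 2 * ε := by
        intro x₁ x₂
        have e1 := herr σ hσ x₁ x₂
        have e2 := herr σ' hσ' x₂ x₁
        have tri : ∀ y, |(∑ s : S₁, W₁ s x₁ y * τ x₂ s) - ∑ s : S₁, W₁ s x₂ y * τ' x₁ s|
            ≤ |(∑ s : S₂, W₂ s x₁ y * σ x₂ s) - ∑ s : S₂, W₂ s x₂ y * σ' x₁ s|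
              + |(∑ s₂ : S₂, W₁ (f s₂) x₁ y * σ x₂ s₂) - ∑ s₂ : S₂, W₂ s₂ x₁ y * σ x₂ s₂|
              + |(∑ s₂ : S₂, W₁ (f s₂) x₂ y * σ' x₁ s₂) - ∑ s₂ : S₂, W₂ s₂ x₂ y * σ' x₁ s₂| := by
          intro y
          rw [hrw σ x₁ x₂ y, hrw σ' x₂ x₁ y]
          set A := ∑ s₂ : S₂, W₁ (f s₂) x₁ y * σ x₂ s₂
          set B := ∑ s₂ : S₂, W₁ (f s₂) x₂ y * σ' x₁ s₂
          set A' := ∑ s : S₂, W₂ s x₁ y * σ x₂ s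
          set B' := ∑ s : S₂, W₂ s x₂ y * σ' x₁ s
          have : A - B = (A' - B') + (A - A') + (B' - B) := by ring
          rw [this]
          refine (abs_add_le _ _).trans ?_
          have h := abs_add_le (A' - B') (A - A')
          have h2 : |B' - B| = |B - B'| := abs_sub_comm _ _
          linarith
        calc (∑ y, |(∑ s : S₁, W₁ s x₁ y * τ x₂ s) - ∑ s : S₁, W₁ s x₂ y * τ' x₁ s|)
            ≤ ∑ y, (|(∑ s : S₂, W₂ s x₁ y * σ x₂ s) - ∑ s : S₂, W₂ s x₂ y * σ' x₁ s|
              + |(∑ s₂ : S₂, W₁ (f s₂) x₁ y * σ x₂ s₂) - ∑ s₂ : S₂, W₂ s₂ x₁ y * σ x₂ s₂|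
              + |(∑ s₂ : S₂, W₁ (f s₂) x₂ y * σ' x₁ s₂) - ∑ s₂ : S₂, W₂ s₂ x₂ y * σ' x₁ s₂|) :=
              Finset.sum_le_sum fun y _ => tri y
          _ = (∑ y, |(∑ s : S₂, W₂ s x₁ y * σ x₂ s) - ∑ s : S₂, W₂ s x₂ y * σ' x₁ s|)
              + (∑ y, |(∑ s₂ : S₂, W₁ (f s₂) x₁ y * σ x₂ s₂) - ∑ s₂ : S₂, W₂ s₂ x₁ y * σ x₂ s₂|)
              + (∑ y, |(∑ s₂ : S₂, W₁ (f s₂) x₂ y * σ' x₁ s₂) - ∑ s₂ : S₂, W₂ s₂ x₂ y * σ' x₁ s₂|) := by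
              rw [Finset.sum_add_distrib, Finset.sum_add_distrib]
          _ ≤ (∑ y, |(∑ s : S₂, W₂ s x₁ y * σ x₂ s) - ∑ s : S₂, W₂ s x₂ y * σ' x₁ s|) + 2 * ε := by
              linarith
      unfold Fsym
      calc (∑ x₁ : X, ∑ x₂ : X, ∑ y,
              |(∑ s : S₁, W₁ s x₁ y * τ x₂ s) - ∑ s : S₁, W₁ s x₂ y * τ' x₁ s|)
          ≤ ∑ x₁ : X, ∑ x₂ : X,
              ((∑ y, |(∑ s : S₂, W₂ s x₁ y * σ x₂ s) - ∑ s : S₂, W₂ s x₂ y * σ' x₁ s|) + 2 * ε) :=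
            Finset.sum_le_sum fun x₁ _ => Finset.sum_le_sum fun x₂ _ => hpair x₁ x₂
        _ = (∑ x₁ : X, ∑ x₂ : X, ∑ y,
              |(∑ s : S₂, W₂ s x₁ y * σ x₂ s) - ∑ s : S₂, W₂ s x₂ y * σ' x₁ s|)
              + 2 * n ^ 2 * ε := by
            simp only [Finset.sum_add_distrib, Finset.sum_const, Finset.card_univ, nsmul_eq_mul]
            ring
    -- δ ≤ Fsym τ τ' W₁
    have hmem : Fsym τ τ' W₁ ∈ {r : ℝ | ∃ σ σ' : X → S₁ → ℝ,
        IsChannel σ ∧ IsChannel σ' ∧ r = Fsym σ σ' W₁} := ⟨τ, τ', hτc, hτ'c, rfl⟩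
    have hbdd : BddBelow {r : ℝ | ∃ σ σ' : X → S₁ → ℝ,
        IsChannel σ ∧ IsChannel σ' ∧ r = Fsym σ σ' W₁} := by
      refine ⟨0, fun r hr => ?_⟩
      obtain ⟨a, b, _, _, rfl⟩ := hr
      exact Fsym_nonneg a b W₁
    have hδle : δ ≤ Fsym τ τ' W₁ := hmin ▸ csInf_le hbdd hmem
    have : 2 * n ^ 2 * ε = δ / 2 := by
      rw [hε]; field_simp; ring
    linarith
  -- uniform channel on S₂ to witness nonemptiness
  have huni : IsChannel (fun (_ : X) (_ : S₂) => (Fintype.card S₂ : ℝ)⁻¹) := by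
    intro x
    have hc : (0:ℝ) < (Fintype.card S₂ : ℝ) := by exact_mod_cast Fintype.card_pos
    constructor
    · intro s; positivity
    · rw [Finset.sum_const, Finset.card_univ, nsmul_eq_mul, mul_inv_cancel₀ (ne_of_gt hc)]
  have hne : {r : ℝ | ∃ σ σ' : X → S₂ → ℝ,
      IsChannel σ ∧ IsChannel σ' ∧ r = Fsym σ σ' W₂}.Nonempty :=
    ⟨_, _, _, huni, huni, rfl⟩
  have hsinf : δ / 2 ≤ sInf {r : ℝ | ∃ σ σ' : X → S₂ → ℝ,
      IsChannel σ ∧ IsChannel σ' ∧ r = Fsym σ σ' W₂} := by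
    refine le_csInf hne fun r hr => ?_
    obtain ⟨a, b, ha, hb, rfl⟩ := hr
    exact key a b ha hb
  refine ⟨hsinf, ?_⟩
  rintro ⟨σ, hσ, hsym⟩
  have h0 : Fsym σ σ W₂ = 0 := by
    unfold Fsym
    refine Finset.sum_eq_zero fun x₁ _ => Finset.sum_eq_zero fun x₂ _ =>
      Finset.sum_eq_zero fun y _ => ?_
    rw [hsym x₁ x₂ y, sub_self, abs_zero]
  have := key σ σ hσ hσ
  rw [h0] at this
  linarith
end
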